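/- Kummer's quadratic transformation: for T in a neighborhood of 0 (with 4T(1−T) in the disc of convergence), 2F1(μ/2, (1−μ)/2; 1; 4T(1−T)) = 2F1(μ, 1−μ; 1; T). -/

import Mathlib

/-- The Pochhammer rising factorial `(a)_n = a(a+1)⋯(a+n−1)`. -/
noncomputable def poch (a : ℝ) (n : ℕ) : ℝ := Polynomial.eval a (ascPochhammer ℝ n)

/-- The Gauss hypergeometric function `2F1(a,b;c;t) = ∑ (a)_n (b)_n/((c)_n n!) tⁿ`. -/
noncomputable def F21 (a b c : ℝ) (t : ℝ) : ℝ :=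
  ∑' n : ℕ, poch a n * poch b n / (poch c n * (Nat.factorial n : ℝ)) * t ^ n

lemma poch_zero (x : ℝ) : poch x 0 = 1 := by simp [poch]

lemma poch_succ (x : ℝ) (n : ℕ) : poch x (n + 1) = poch x n * (x + n) := by
  simp [poch, ascPochhammer_succ_eval]

lemma poch_one_eq (n : ℕ) : poch 1 n = (n.factorial : ℝ) := by
  simp [poch]

lemma abs_poch_le (x : ℝ) (n : ℕ) : |poch x n| ≤ (n.factorial : ℝ) * (|x| + 1) ^ n := by
  induction n with
  | zero => simp [poch_zero]
  | succ n ih =>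
    rw [poch_succ, abs_mul]
    have h1 : |x + (n : ℝ)| ≤ (|x| + 1) * ((n : ℝ) + 1) := by
      have := abs_add_le x (n : ℝ)
      have hn : |(n : ℝ)| = (n : ℝ) := abs_of_nonneg (Nat.cast_nonneg n)
      have hx := abs_nonneg x
      nlinarith [this]
    calc |poch x n| * |x + (n : ℝ)|
        ≤ ((n.factorial : ℝ) * (|x| + 1) ^ n) * ((|x| + 1) * ((n : ℝ) + 1)) := by
          apply mul_le_mul ih h1 (abs_nonneg _) (by positivity)
      _ = ((n + 1).factorial : ℝ) * (|x| + 1) ^ (n + 1) := by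
          rw [Nat.factorial_succ]; push_cast; ring

/-- Series coefficient of `2F1(μ/2,(1-μ)/2;1;·)`. -/
noncomputable def KP (μ : ℝ) (n : ℕ) : ℝ :=
  poch (μ/2) n * poch ((1-μ)/2) n / ((n.factorial : ℝ))^2

/-- Term of the regrouped double series. -/
noncomputable def Kt (μ : ℝ) (m k : ℕ) : ℝ :=
  (-1)^k * 4^(m-k) * (((m-k).choose k : ℕ) : ℝ) * KP μ (m-k)

/-- Coefficient of `T^m` in the LHS. -/
noncomputable def Ke (μ : ℝ) (m : ℕ) : ℝ := ∑ k ∈ Finset.range (m+1), Kt μ m k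

/-- Coefficient of `T^m` in the RHS. -/
noncomputable def Kd (μ : ℝ) (m : ℕ) : ℝ :=
  poch μ m * poch (1-μ) m / ((m.factorial : ℝ))^2

lemma KP_rec (μ : ℝ) (n : ℕ) :
    ((n : ℝ) + 1)^2 * KP μ (n+1) = ((n : ℝ) + μ/2) * ((n : ℝ) + (1-μ)/2) * KP μ n := by
  have hf : ((n.factorial : ℝ)) ≠ 0 := Nat.cast_ne_zero.mpr n.factorial_ne_zero
  rw [KP, KP, poch_succ, poch_succ, Nat.factorial_succ]
  push_cast
  field_simp
  ring

lemma Kd_rec (μ : ℝ) (m : ℕ) :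
    ((m : ℝ) + 1)^2 * Kd μ (m+1) = ((m : ℝ)^2 + m + μ*(1-μ)) * Kd μ m := by
  have hf : ((m.factorial : ℝ)) ≠ 0 := Nat.cast_ne_zero.mpr m.factorial_ne_zero
  rw [Kd, Kd, poch_succ, poch_succ, Nat.factorial_succ]
  push_cast
  field_simp
  ring

lemma chooseA (n k : ℕ) :
    ((n : ℝ) + 1 - k) * (((n+1).choose k : ℕ) : ℝ) = ((n : ℝ) + 1) * ((n.choose k : ℕ) : ℝ) := by
  rcases le_or_gt k (n+1) with h | h
  · have := Nat.choose_mul_succ_eq n k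
    have hcast : ((n.choose k * (n + 1) : ℕ) : ℝ) = (((n+1).choose k * (n + 1 - k) : ℕ) : ℝ) := by
      exact_mod_cast congrArg (Nat.cast (R := ℝ)) this
    push_cast [Nat.cast_sub h] at hcast
    linarith [hcast]
  · rw [Nat.choose_eq_zero_of_lt h, Nat.choose_eq_zero_of_lt (by omega)]
    simp

lemma chooseB (n k : ℕ) :
    ((k : ℝ) + 1) * ((n.choose (k+1) : ℕ) : ℝ) = ((n : ℝ) - k) * ((n.choose k : ℕ) : ℝ) := by
  rcases le_or_gt k n with h | h
  · have := Nat.choose_succ_right_eq n k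
    have hcast : ((n.choose (k+1) * (k + 1) : ℕ) : ℝ) = ((n.choose k * (n - k) : ℕ) : ℝ) := by
      exact_mod_cast congrArg (Nat.cast (R := ℝ)) this
    push_cast [Nat.cast_sub h] at hcast
    linarith [hcast]
  · rw [Nat.choose_eq_zero_of_lt h, Nat.choose_eq_zero_of_lt (by omega)]
    simp

lemma Kt_top (μ : ℝ) (m k : ℕ) (h : m < 2*k) : Kt μ m k = 0 := by
  have h2 : (m - k).choose k = 0 := Nat.choose_eq_zero_of_lt (by omega)
  simp [Kt, h2]

lemma per_term (μ : ℝ) (m k : ℕ) (hk : k ≤ m + 1) :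
    ((m:ℝ)+1)^2 * Kt μ (m+1) k - ((m:ℝ)^2 + m + μ*(1-μ)) * Kt μ m k
      = (((k:ℝ)+1) * (2*((k:ℝ)+1) - 3*m - 3)) * Kt μ (m+1) (k+1)
        - ((k:ℝ) * (2*(k:ℝ) - 3*m - 3)) * Kt μ (m+1) k := by
  rcases Nat.lt_or_ge m k with h | h
  · -- k = m + 1
    have hk1 : k = m + 1 := by omega
    subst hk1
    rw [Kt_top μ (m+1) (m+2) (by omega), Kt_top μ m (m+1) (by omega),
        Kt_top μ (m+1) (m+1) (by omega)]
    ring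
  · -- k ≤ m
    obtain ⟨n, rfl⟩ := Nat.exists_eq_add_of_le h
    have e1 : k + n + 1 - k = n + 1 := by omega
    have e2 : k + n - k = n := by omega
    have e3 : k + n + 1 - (k + 1) = n := by omega
    simp only [Kt, e1, e2, e3]
    have h1 := KP_rec μ n
    have h2 := chooseA n k
    have h3 := chooseB n k
    push_cast
    linear_combination
      ((-1:ℝ)^k * 4^n * 4 * ((n:ℝ)+1) * KP μ (n+1)) * h2
      + ((-1:ℝ)^k * 4^n * 4 * ((n.choose k : ℕ) : ℝ)) * h1
      + ((-1:ℝ)^k * 4^n * (-(3*(n:ℝ)) - k - 1) * KP μ n) * h3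

lemma Ke_rec (μ : ℝ) (m : ℕ) :
    ((m:ℝ)+1)^2 * Ke μ (m+1) = ((m:ℝ)^2 + m + μ*(1-μ)) * Ke μ m := by
  have hKe : Ke μ m = ∑ k ∈ Finset.range (m+2), Kt μ m k := by
    rw [show m + 2 = (m+1) + 1 from rfl, Finset.sum_range_succ,
        Kt_top μ m (m+1) (by omega), add_zero, Ke]
  have key : ((m:ℝ)+1)^2 * Ke μ (m+1) - ((m:ℝ)^2 + m + μ*(1-μ)) * Ke μ m = 0 := by
    rw [Ke, hKe, Finset.mul_sum, Finset.mul_sum, ← Finset.sum_sub_distrib]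
    set G : ℕ → ℝ := fun j => ((j:ℝ) * (2*(j:ℝ) - 3*(m:ℝ) - 3)) * Kt μ (m+1) j with hG
    have : ∀ k ∈ Finset.range (m+2),
        ((m:ℝ)+1)^2 * Kt μ (m+1) k - ((m:ℝ)^2 + m + μ*(1-μ)) * Kt μ m k
          = G (k+1) - G k := by
      intro k hk
      have hk' : k ≤ m + 1 := by
        have := Finset.mem_range.mp hk; omega
      have h := per_term μ m k hk'
      rw [hG]
      push_cast
      linarith [h]
    rw [Finset.sum_congr rfl this, Finset.sum_range_sub G (m+2)]
    rw [hG]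
    simp [Kt_top μ (m+1) (m+2) (by omega)]
  linarith [key]

lemma Ke_eq_Kd (μ : ℝ) (m : ℕ) : Ke μ m = Kd μ m := by
  induction m with
  | zero => simp [Ke, Kd, Kt, KP, poch_zero]
  | succ m ih =>
    have h1 := Ke_rec μ m
    have h2 := Kd_rec μ m
    rw [ih] at h1
    have hne : ((m:ℝ)+1)^2 ≠ 0 := by positivity
    apply mul_left_cancel₀ hne
    rw [h1, h2]

/-- Kummer's quadratic transformation: for `T` in a neighborhood of `0`,
`2F1(μ/2, (1−μ)/2; 1; 4T(1−T)) = 2F1(μ, 1−μ; 1; T)`. -/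
theorem kummer_quadratic_transformation (μ : ℝ) :
    ∃ ε > (0 : ℝ), ∀ T : ℝ, |T| < ε →
      F21 (μ/2) ((1 - μ)/2) 1 (4 * T * (1 - T)) = F21 μ (1 - μ) 1 T := by
  set K : ℝ := (|μ/2| + 1) * (|(1-μ)/2| + 1) with hK
  have hK1 : (1:ℝ) ≤ K := by nlinarith [abs_nonneg (μ/2), abs_nonneg ((1-μ)/2)]
  have hKpos : (0:ℝ) < K := by linarith
  refine ⟨1/(8*K), by positivity, fun T hT => ?_⟩
  have hKP : ∀ n, |KP μ n| ≤ K ^ n := by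
    intro n
    have hfpos : (0:ℝ) < (n.factorial : ℝ) := by exact_mod_cast n.factorial_pos
    have h1 := abs_poch_le (μ/2) n
    have h2 := abs_poch_le ((1-μ)/2) n
    rw [KP, abs_div, abs_mul, div_le_iff₀ (by positivity)]
    have habs2 : |((n.factorial:ℝ))^2| = ((n.factorial:ℝ))^2 := abs_of_nonneg (by positivity)
    rw [habs2]
    calc |poch (μ/2) n| * |poch ((1-μ)/2) n|
        ≤ ((n.factorial : ℝ) * (|μ/2| + 1)^n) * ((n.factorial : ℝ) * (|(1-μ)/2| + 1)^n) :=
          mul_le_mul h1 h2 (abs_nonneg _) (by positivity)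
      _ = K^n * (n.factorial:ℝ)^2 := by rw [hK, mul_pow]; ring
  set f : ℕ × ℕ → ℝ :=
    fun p => KP μ p.1 * 4^p.1 * ((p.1.choose p.2 : ℕ) : ℝ) * (-1)^p.2 * T^(p.1+p.2) with hf
  clear_value f
  have hvan : ∀ n k, n < k → f (n, k) = 0 := by
    intro n k h; simp [hf, Nat.choose_eq_zero_of_lt h]
  have habsf : ∀ p : ℕ × ℕ,
      |f p| = |KP μ p.1| * 4^p.1 * ((p.1.choose p.2 : ℕ) : ℝ) * |T|^(p.1+p.2) := by
    intro p
    simp only [hf, abs_mul, abs_pow, abs_neg, abs_one, one_pow, mul_one, Nat.abs_cast]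
    norm_num
  have hfib : ∀ n : ℕ, (∑' k, |f (n, k)|) = |KP μ n| * 4^n * |T|^n * (|T|+1)^n := by
    intro n
    rw [tsum_eq_sum (s := Finset.range (n+1)) (f := fun k => |f (n, k)|)
      (fun k hk => by
        have h0 := hvan n k (by simp at hk; omega)
        simp [h0])]
    rw [add_pow |T| 1 n, Finset.mul_sum]
    apply Finset.sum_congr rfl
    intro k hk
    rw [habsf (n,k)]
    simp only [one_pow, mul_one]
    rw [pow_add]
    ring
  have h8 : 8*K*|T| < 1 := by
    have := (lt_div_iff₀ (show (0:ℝ) < 8*K by positivity)).mp hT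
    linarith
  have hTle : |T| ≤ 1/8 := by nlinarith [abs_nonneg T]
  have hsmall : 4*K*|T| * (|T| + 1) ≤ 9/16 := by
    have heq : 4*K*|T| * (|T| + 1) = (8*K*|T|) * ((|T|+1)/2) := by ring
    rw [heq]
    have := mul_le_mul h8.le (show (|T|+1)/2 ≤ 9/16 by linarith) (by positivity)
      (by norm_num : (0:ℝ) ≤ 1)
    simpa using this
  have hbound : ∀ n, (∑' k, |f (n, k)|) ≤ (9/16 : ℝ)^n := by
    intro n
    rw [hfib n]
    calc |KP μ n| * 4^n * |T|^n * (|T|+1)^n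
        ≤ K^n * 4^n * |T|^n * (|T|+1)^n := by
          have : (0:ℝ) ≤ 4^n * |T|^n * (|T|+1)^n := by positivity
          nlinarith [hKP n, this]
      _ = (4*K*|T| * (|T| + 1))^n := by
          rw [mul_pow (4*K*|T|) (|T|+1) n, mul_pow (4*K) |T| n, mul_pow 4 K n]
          ring
      _ ≤ (9/16 : ℝ)^n := pow_le_pow_left₀ (by positivity) hsmall n
  have hfin : ∀ n, Summable (fun k => f (n, k)) := fun n =>
    summable_of_ne_finset_zero (s := Finset.range (n+1))
      (fun k hk => hvan n k (by simp at hk; omega))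
  have hfinabs : ∀ n, Summable (fun k => |f (n, k)|) := fun n => (hfin n).abs
  have habs_sum : Summable (fun p : ℕ × ℕ => |f p|) := by
    apply (summable_prod_of_nonneg (Pi.le_def.mpr (fun p => abs_nonneg (f p)))).2
    refine ⟨hfinabs, ?_⟩
    apply Summable.of_nonneg_of_le (fun n => tsum_nonneg fun k => abs_nonneg _) hbound
    exact summable_geometric_of_lt_one (by norm_num) (by norm_num)
  have hfsum : Summable f := habs_sum.of_abs
  have step1 : F21 (μ/2) ((1-μ)/2) 1 (4*T*(1-T)) = ∑' n, KP μ n * (4*T*(1-T))^n := by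
    rw [F21]
    apply tsum_congr
    intro n
    rw [poch_one_eq, KP, sq]
  have step2 : ∀ n, KP μ n * (4*T*(1-T))^n = ∑' k, f (n, k) := by
    intro n
    rw [tsum_eq_sum (s := Finset.range (n+1)) (f := fun k => f (n, k))
      (fun k hk => hvan n k (by simp at hk; omega))]
    have hu : 4*T*(1-T) = (4*T)*(-T+1) := by ring
    rw [hu, mul_pow, add_pow, Finset.mul_sum, Finset.mul_sum]
    apply Finset.sum_congr rfl
    intro k hk
    have hneg : (-T) = (-1:ℝ)*T := by ring
    simp only [hf, one_pow, mul_one]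
    rw [hneg, mul_pow (4:ℝ) T n, mul_pow ((-1):ℝ) T k, pow_add]
    ring
  have step4 : (∑' (p : ℕ × ℕ), f p) = ∑' m, Ke μ m * T^m := by
    have hs : Summable (fun x : (Σ n : ℕ, {p // p ∈ Finset.HasAntidiagonal.antidiagonal n}) =>
        f (Finset.HasAntidiagonal.sigmaAntidiagonalEquivProd x)) :=
      (Finset.HasAntidiagonal.sigmaAntidiagonalEquivProd).summable_iff.2 hfsum
    have h1 : (∑' (p : ℕ × ℕ), f p)
        = ∑' x : (Σ n : ℕ, {p // p ∈ Finset.HasAntidiagonal.antidiagonal n}),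
            f (Finset.HasAntidiagonal.sigmaAntidiagonalEquivProd x) :=
      (Finset.HasAntidiagonal.sigmaAntidiagonalEquivProd.tsum_eq f).symm
    have h2 : (∑' x : (Σ n : ℕ, {p // p ∈ Finset.HasAntidiagonal.antidiagonal n}),
            f (Finset.HasAntidiagonal.sigmaAntidiagonalEquivProd x))
        = ∑' (m : ℕ), ∑' (c : {x // x ∈ Finset.HasAntidiagonal.antidiagonal m}),
            f (Finset.HasAntidiagonal.sigmaAntidiagonalEquivProd ⟨m, c⟩) :=
      Summable.tsum_sigma' (fun m => Summable.of_finite) hs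
    rw [h1, h2]
    apply tsum_congr
    intro m
    calc (∑' (c : {x // x ∈ Finset.HasAntidiagonal.antidiagonal m}),
            f (Finset.HasAntidiagonal.sigmaAntidiagonalEquivProd ⟨m, c⟩))
        = ∑ c ∈ Finset.HasAntidiagonal.antidiagonal m, f c := Finset.tsum_subtype _ f
      _ = ∑ k ∈ Finset.range (m+1), f (k, m-k) :=
          Finset.Nat.sum_antidiagonal_eq_sum_range_succ_mk f m
      _ = ∑ k ∈ Finset.range (m+1), Kt μ m (m-k) * T^m := by
          apply Finset.sum_congr rfl
          intro k hk
          have hk' : k ≤ m := by simp at hk; omega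
          have e4 : m - (m - k) = k := Nat.sub_sub_self hk'
          have e5 : k + (m - k) = m := Nat.add_sub_cancel' hk'
          simp only [hf, Kt, e4, e5]
          ring
      _ = ∑ j ∈ Finset.range (m+1), Kt μ m j * T^m := by
          have := Finset.sum_range_reflect (fun j => Kt μ m j * T^m) (m+1)
          simpa using this
      _ = Ke μ m * T^m := by rw [Ke, Finset.sum_mul]
  have step5 : (∑' m, Ke μ m * T^m) = F21 μ (1-μ) 1 T := by
    rw [F21]
    apply tsum_congr
    intro m
    rw [Ke_eq_Kd, Kd, poch_one_eq, sq]
  rw [step1, tsum_congr step2, Summable.tsum_prod' hfsum hfin |>.symm, step4, step5]
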